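/- Let n ≥ 2, 0 < σ < 2, λ ∈ ℝ, and let W ∈ C^{1,1}_loc(ℝⁿ) ∩ L_σ be anti-symmetric about T_λ (W(x^λ) = -W(x) for all x). Suppose W(y) ≥ 0 for all y ∈ Σ_λ and W is not identically 0 on Σ_λ. If x₀ ∈ Σ_λ satisfies W(x₀) = 0, then (-Δ)^{σ/2}W(x₀) < 0. -/

import Mathlib

open MeasureTheory Filter Metric Set Bornology

noncomputable section

/-- The space `ℝⁿ`. -/
abbrev En (n : ℕ) := EuclideanSpace ℝ (Fin n)

/-- Membership in the weighted space `L_σ`. -/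
def MemL (n : ℕ) (σ : ℝ) (w : En n → ℝ) : Prop :=
  LocallyIntegrable w volume ∧
    Integrable (fun x : En n => |w x| / (1 + ‖x‖ ^ ((n : ℝ) + σ))) volume

/-- `C^{1,1}_loc` on an open set `Ω`: near every point of `Ω`, `w` is
differentiable with Lipschitz-continuous derivative. -/
def C11locOn (n : ℕ) (Ω : Set (En n)) (w : En n → ℝ) : Prop :=
  ∀ x ∈ Ω, ∃ ε > 0, ∃ K : NNReal, ball x ε ⊆ Ω ∧
    (∀ y ∈ ball x ε, DifferentiableAt ℝ w y) ∧
    LipschitzOnWith K (fderiv ℝ w) (ball x ε)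

/-- `C^{1,1}_loc` on all of `ℝⁿ`. -/
def C11loc (n : ℕ) (w : En n → ℝ) : Prop := C11locOn n univ w

/-- `HasFracLap n σ c w x L` : the fractional Laplacian `(-Δ)^{σ/2} w`, with
normalization constant `c = C_{n,σ} > 0`, exists at `x` as a principal value
and is equal to `L`. -/
def HasFracLap (n : ℕ) (σ c : ℝ) (w : En n → ℝ) (x : En n) (L : ℝ) : Prop :=
  Tendsto
    (fun ε : ℝ => c * ∫ y in {y : En n | ε ≤ dist x y},
        (w x - w y) / dist x y ^ ((n : ℝ) + σ))
    (nhdsWithin 0 (Ioi 0)) (nhds L)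

/-- Reflection `x ↦ x^λ` about the hyperplane `T_λ = {x : x₁ = λ}`. -/
def reflPt (n : ℕ) [NeZero n] (l : ℝ) (x : En n) : En n :=
  WithLp.toLp 2 (fun i => if i = 0 then 2 * l - x 0 else x i)

/-- The half space `Σ_λ = {x : x₁ < λ}`. -/
def halfSpace (n : ℕ) [NeZero n] (l : ℝ) : Set (En n) := {x | x 0 < l}

section Aux
set_option linter.unusedSectionVars false
variable {n : ℕ} [NeZero n] {lam : ℝ}

lemma refl_invol (x : En n) : reflPt n lam (reflPt n lam x) = x := by
  ext i
  simp only [reflPt, PiLp.toLp_apply, WithLp.ofLp_toLp]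
  by_cases h : i = 0
  · subst h; simp
  · simp [h]

lemma refl_apply_zero (x : En n) : reflPt n lam x 0 = 2 * lam - x 0 := by
  simp [reflPt]

lemma refl_apply_ne (x : En n) {i : Fin n} (h : i ≠ 0) : reflPt n lam x i = x i := by
  simp [reflPt, h]

lemma mp_refl : MeasurePreserving (reflPt n lam) (volume : Measure (En n)) volume := by
  have hg : MeasurePreserving
      (fun (x : Fin n → ℝ) i => if i = 0 then 2 * lam - x 0 else x i)
      (volume : Measure (Fin n → ℝ)) volume := by
    have h1 : ∀ i : Fin n, MeasurePreserving
        (fun t : ℝ => if i = 0 then 2 * lam - t else t) volume volume := by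
      intro i
      by_cases h : i = 0
      · simp only [h, eq_self_iff_true, if_true]
        convert (measurePreserving_add_left (volume : Measure ℝ) (2 * lam)).comp
            (Measure.measurePreserving_neg (volume : Measure ℝ)) using 1
        funext t; simp only [Function.comp_apply]; ring
      · simp only [h, if_false]
        exact MeasurePreserving.id (volume : Measure ℝ)
    have := measurePreserving_pi (fun _ : Fin n => (volume : Measure ℝ))
      (fun _ => volume) h1
    rw [volume_pi] at *
    have heq : (fun (x : Fin n → ℝ) i => if i = 0 then 2 * lam - x 0 else x i) =
        (fun a i => if i = 0 then 2 * lam - a i else a i) := by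
      funext x i
      by_cases h : i = 0 <;> simp [h]
    rw [heq]; exact this
  have e := EuclideanSpace.volume_preserving_symm_measurableEquiv_toLp (Fin n)
  have e2 := MeasurePreserving.symm _ e
  have comp := (e2.comp hg).comp e
  exact comp

def reflEquiv (n : ℕ) [NeZero n] (lam : ℝ) : MeasurableEquiv (En n) (En n) where
  toFun := reflPt n lam
  invFun := reflPt n lam
  left_inv := refl_invol
  right_inv := refl_invol
  measurable_toFun := mp_refl.measurable
  measurable_invFun := mp_refl.measurable

lemma dist_sq_refl (x z : En n) :
    dist x (reflPt n lam z) ^ 2 = dist x z ^ 2 + 4 * (lam - x 0) * (lam - z 0) := by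
  rw [EuclideanSpace.dist_eq, EuclideanSpace.dist_eq, Real.sq_sqrt, Real.sq_sqrt]
  · rw [Fintype.sum_eq_add_sum_compl 0, Fintype.sum_eq_add_sum_compl 0]
    have : ∀ i ∈ ({0}ᶜ : Finset (Fin n)), dist (x i) (reflPt n lam z i) ^ 2 = dist (x i) (z i) ^ 2 := by
      intro i hi
      rw [refl_apply_ne _ (by simpa using hi)]
    rw [Finset.sum_congr rfl this, refl_apply_zero]
    rw [Real.dist_eq, Real.dist_eq, sq_abs, sq_abs]
    ring
  · positivity
  · positivity

lemma abs_coord_le_dist (x z : En n) (i : Fin n) : |x i - z i| ≤ dist x z := by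
  rw [EuclideanSpace.dist_eq]
  rw [← Real.sqrt_sq (abs_nonneg (x i - z i))]
  apply Real.sqrt_le_sqrt
  rw [sq_abs]
  have : (x i - z i)^2 = dist (x i) (z i) ^ 2 := by rw [Real.dist_eq, sq_abs]
  rw [this]
  exact Finset.single_le_sum (f := fun j => dist (x j) (z j) ^ 2)
    (fun j _ => sq_nonneg _) (Finset.mem_univ i)

lemma dist_refl_ge (x z : En n) (hz : z 0 ≤ lam) :
    lam - x 0 ≤ dist x (reflPt n lam z) := by
  have h := abs_coord_le_dist x (reflPt n lam z) 0
  rw [refl_apply_zero] at h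
  refine le_trans ?_ h
  rw [abs_sub_comm]
  calc lam - x 0 ≤ (2 * lam - z 0) - x 0 := by linarith
    _ ≤ |2 * lam - z 0 - x 0| := le_abs_self _

lemma dist_lt_refl (x z : En n) (hx : x 0 < lam) (hz : z 0 < lam) :
    dist x z < dist x (reflPt n lam z) := by
  have h := dist_sq_refl (lam := lam) x z
  have h4 : 0 < 4 * (lam - x 0) * (lam - z 0) := by
    have h1 : 0 < lam - x 0 := by linarith
    have h2 : 0 < lam - z 0 := by linarith
    positivity
  have hsq : dist x z ^ 2 < dist x (reflPt n lam z) ^ 2 := by linarith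
  exact lt_of_pow_lt_pow_left₀ 2 dist_nonneg hsq

lemma null_hyperplane : volume {x : En n | x 0 = lam} = 0 := by
  have e := EuclideanSpace.volume_preserving_symm_measurableEquiv_toLp (Fin n)
  have : {x : En n | x 0 = lam} =
      (MeasurableEquiv.toLp 2 (Fin n → ℝ)).symm ⁻¹' {y : Fin n → ℝ | y 0 = lam} := rfl
  rw [this, e.measure_preimage]
  · have hset : {y : Fin n → ℝ | y 0 = lam} =
        Set.pi univ (fun i => if i = 0 then {lam} else univ) := by
      ext y
      simp only [Set.mem_setOf_eq, Set.mem_pi, Set.mem_univ, forall_true_left]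
      constructor
      · intro h i; by_cases hi : i = 0 <;> simp [hi, h]
      · intro h; have := h 0; simpa using this
    rw [hset, volume_pi, Measure.pi_pi]
    exact Finset.prod_eq_zero (Finset.mem_univ 0) (by simp)
  · have hm : Measurable (fun y : Fin n → ℝ => y 0) := measurable_pi_apply 0
    exact (measurableSet_eq_fun hm measurable_const).nullMeasurableSet

lemma kernel_integrableOn {σ : ℝ} (hσ : 0 < σ) {W : En n → ℝ} (hWc : Continuous W)
    (hWi : Integrable (fun x : En n => |W x| / (1 + ‖x‖ ^ ((n : ℝ) + σ))) volume)
    (x₀ : En n) {ε : ℝ} (hε : 0 < ε) :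
    IntegrableOn (fun y => W y / dist x₀ y ^ ((n:ℝ) + σ)) {y | ε ≤ dist x₀ y} volume := by
  set p := (n:ℝ) + σ with hp_def
  have hp : 0 < p := by positivity
  have hdc : Continuous (fun y : En n => dist x₀ y ^ p) :=
    (continuous_const.dist continuous_id).rpow_const (fun y => Or.inr hp.le)
  have hmeas : AEStronglyMeasurable (fun y : En n => W y / dist x₀ y ^ p) volume :=
    (hWc.measurable.div hdc.measurable).aestronglyMeasurable
  set R : ℝ := max (2 * ‖x₀‖ + 2) ε with hR_def
  have hRe : ε ≤ R := le_max_right _ _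
  have hRx : 2 * ‖x₀‖ + 2 ≤ R := le_max_left _ _
  have hcover : {y : En n | ε ≤ dist x₀ y} ⊆
      (closedBall x₀ R \ ball x₀ ε) ∪ {y | R ≤ dist x₀ y} := by
    intro y hy
    simp only [Set.mem_setOf_eq] at hy
    by_cases h : dist x₀ y ≤ R
    · left
      refine ⟨by rwa [mem_closedBall, dist_comm], ?_⟩
      simp only [mem_ball, not_lt, dist_comm y x₀]
      exact hy
    · right; simp only [Set.mem_setOf_eq]; linarith
  refine IntegrableOn.mono_set (IntegrableOn.union ?_ ?_) hcover
  · -- compact part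
    have hK : IsCompact (closedBall x₀ R \ ball x₀ ε) :=
      (isCompact_closedBall x₀ R).diff isOpen_ball
    refine ContinuousOn.integrableOn_compact hK ?_
    refine hWc.continuousOn.div hdc.continuousOn ?_
    intro y hy
    have : ε ≤ dist x₀ y := by
      have := hy.2
      simp only [mem_ball, not_lt, dist_comm y x₀] at this
      exact this
    exact ne_of_gt (Real.rpow_pos_of_pos (lt_of_lt_of_le hε this) p)
  · -- far part
    have hSm : MeasurableSet {y : En n | R ≤ dist x₀ y} :=
      (isClosed_le continuous_const (continuous_const.dist continuous_id)).measurableSet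
    have hg : IntegrableOn (fun y : En n => (2:ℝ)^(p+1) * (|W y| / (1 + ‖y‖^p)))
        {y | R ≤ dist x₀ y} volume := (hWi.const_mul _).integrableOn
    refine Integrable.mono' hg hmeas.restrict ?_
    filter_upwards [ae_restrict_mem hSm] with y hymem
    have hy : R ≤ dist x₀ y := hymem
    set d := dist x₀ y with hd_def
    have hd0 : (0:ℝ) ≤ d := dist_nonneg
    have hd2 : (2:ℝ) ≤ d := by
      have : (0:ℝ) ≤ ‖x₀‖ := norm_nonneg _
      linarith
    have hyn : ‖y‖ ≤ 2 * d := by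
      have h1 : ‖y‖ ≤ ‖x₀‖ + dist x₀ y := by
        have := dist_triangle (0 : En n) x₀ y
        simpa [dist_zero_left] using this
      have : ‖x₀‖ ≤ d := by linarith
      linarith
    have h1 : (1:ℝ) ≤ d ^ p := by
      have := Real.rpow_le_rpow (by norm_num : (0:ℝ) ≤ 1) (by linarith : (1:ℝ) ≤ d) hp.le
      simpa using this
    have hyp : ‖y‖ ^ p ≤ 2^p * d^p := by
      calc ‖y‖ ^ p ≤ (2*d) ^ p := Real.rpow_le_rpow (norm_nonneg _) hyn hp.le
        _ = 2^p * d^p := Real.mul_rpow (by norm_num) hd0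
    have h2p : (1:ℝ) ≤ 2^p := by
      have := Real.rpow_le_rpow (by norm_num : (0:ℝ) ≤ 1) (by norm_num : (1:ℝ) ≤ 2) hp.le
      simpa using this
    have key : 1 + ‖y‖^p ≤ 2^(p+1) * d^p := by
      have h2 : (2:ℝ)^(p+1) = 2^p * 2 := by
        rw [Real.rpow_add (by norm_num), Real.rpow_one]
      rw [h2]
      nlinarith [Real.rpow_pos_of_pos (lt_of_lt_of_le (by norm_num : (0:ℝ) < 2) hd2) p]
    have hdp : (0:ℝ) < d ^ p := Real.rpow_pos_of_pos (by linarith) p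
    have hpos : (0:ℝ) < 1 + ‖y‖^p := by
      have : (0:ℝ) ≤ ‖y‖^p := Real.rpow_nonneg (norm_nonneg _) p
      linarith
    rw [Real.norm_eq_abs, abs_div, abs_of_nonneg hdp.le, mul_div_assoc',
      div_le_div_iff₀ hdp hpos]
    nlinarith [abs_nonneg (W y), mul_le_mul_of_nonneg_left key (abs_nonneg (W y))]

lemma refl_isometry : Isometry (reflPt n lam : En n → En n) := by
  apply Isometry.of_dist_eq
  intro a b
  rw [EuclideanSpace.dist_eq, EuclideanSpace.dist_eq]
  congr 1
  apply Finset.sum_congr rfl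
  intro i _
  by_cases h : i = 0
  · subst h
    rw [refl_apply_zero, refl_apply_zero, Real.dist_eq, Real.dist_eq]
    congr 1
    rw [abs_sub_comm]
    ring_nf
  · rw [refl_apply_ne _ h, refl_apply_ne _ h]

lemma refl_continuous : Continuous (reflPt n lam : En n → En n) :=
  refl_isometry.continuous

end Aux

set_option maxHeartbeats 1000000 in
/-- strong maximum principle for anti-symmetric functions:
if `W ≥ 0` on `Σ_λ`, `W ≢ 0` on `Σ_λ`, and `W(x₀) = 0` at some `x₀ ∈ Σ_λ`,
then `(-Δ)^{σ/2} W(x₀) < 0`. -/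
theorem statement10
    (n : ℕ) [NeZero n] (hn : 2 ≤ n)
    (σ : ℝ) (hσ : 0 < σ ∧ σ < 2) (lam : ℝ)
    (cns : ℝ) (hcns : 0 < cns)
    (W : En n → ℝ) (hW_reg : C11loc n W) (hW_L : MemL n σ W)
    (hW_anti : ∀ x, W (reflPt n lam x) = -W x)
    (hW_nonneg : ∀ y ∈ halfSpace n lam, 0 ≤ W y)
    (hW_ne : ∃ y ∈ halfSpace n lam, W y ≠ 0)
    (x₀ : En n) (hx₀ : x₀ ∈ halfSpace n lam) (hzero : W x₀ = 0) :
    ∀ L, HasFracLap n σ cns W x₀ L → L < 0 := by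
  intro L hL
  obtain ⟨hσ0, hσ2⟩ := hσ
  set p : ℝ := (n : ℝ) + σ with hp_def
  have hp : 0 < p := by positivity
  -- continuity of W
  have hWc : Continuous W := by
    rw [continuous_iff_continuousAt]
    intro x
    obtain ⟨ε, hε, K, -, hdiff, -⟩ := hW_reg x (mem_univ x)
    exact (hdiff x (mem_ball_self hε)).continuousAt
  have hx₀lam : x₀ 0 < lam := hx₀
  set d₀ : ℝ := lam - x₀ 0 with hd₀_def
  have hd₀ : 0 < d₀ := by simp only [hd₀_def]; linarith
  set f : En n → ℝ := fun y => W y / dist x₀ y ^ p with hf_def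
  have hint : ∀ {ε : ℝ}, 0 < ε → IntegrableOn f {y | ε ≤ dist x₀ y} volume :=
    fun hε => kernel_integrableOn hσ0 hWc hW_L.2 x₀ hε
  -- the reflected kernel function
  set g : En n → ℝ := fun z => W z / dist x₀ (reflPt n lam z) ^ p with hg_def
  have hgf : ∀ z, g z = -(f (reflPt n lam z)) := by
    intro z
    simp only [hg_def, hf_def, hW_anti z, neg_div, neg_neg]
  -- integrability of g on the closed half space
  have hHSm : MeasurableSet (halfSpace n lam) := by
    have : IsOpen (halfSpace n lam) := by
      have hc : Continuous (fun x : En n => x 0) := (EuclideanSpace.proj (𝕜 := ℝ) (0 : Fin n)).continuous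
      exact isOpen_lt hc continuous_const
    exact this.measurableSet
  have hembed : MeasurableEmbedding (reflPt n lam : En n → En n) :=
    (reflEquiv n lam).measurableEmbedding
  have hpre_cl : (reflPt n lam : En n → En n) ⁻¹' {y : En n | lam ≤ y 0} = {z : En n | z 0 ≤ lam} := by
    ext z
    simp only [Set.mem_preimage, Set.mem_setOf_eq, refl_apply_zero]
    constructor <;> intro h <;> linarith
  have hsub_d₀ : {y : En n | lam ≤ y 0} ⊆ {y : En n | d₀ ≤ dist x₀ y} := by
    intro y hy
    have h1 := abs_coord_le_dist x₀ y 0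
    have hy' : lam ≤ y 0 := hy
    have : d₀ ≤ |x₀ 0 - y 0| := by
      rw [abs_sub_comm]
      calc d₀ ≤ y 0 - x₀ 0 := by simp only [hd₀_def]; linarith
        _ ≤ |y 0 - x₀ 0| := le_abs_self _
    exact le_trans this h1
  have hgInt : IntegrableOn g {z : En n | z 0 ≤ lam} volume := by
    have h1 : IntegrableOn f {y : En n | lam ≤ y 0} volume :=
      (hint hd₀).mono_set hsub_d₀
    have h2 : IntegrableOn (f ∘ (reflPt n lam)) {z : En n | z 0 ≤ lam} volume := by
      rw [← hpre_cl]
      exact (mp_refl.integrableOn_comp_preimage hembed).mpr h1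
    have : IntegrableOn (fun z => -(f (reflPt n lam z))) {z : En n | z 0 ≤ lam} volume := h2.neg
    exact this.congr_fun (fun z _ => (hgf z).symm) (by
      exact (isClosed_le (EuclideanSpace.proj (𝕜 := ℝ) (0 : Fin n)).continuous continuous_const).measurableSet)
  -- choice of the bump ball
  obtain ⟨z₀, hz0HS, hz₀ne⟩ := hW_ne
  have hz₀pos : 0 < W z₀ := lt_of_le_of_ne (hW_nonneg z₀ hz0HS) (Ne.symm hz₀ne)
  set m : ℝ := W z₀ / 2 with hm_def
  have hm : 0 < m := by positivity
  have hUopen : IsOpen (halfSpace n lam ∩ W ⁻¹' (Ioi m)) := by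
    have hHSo : IsOpen (halfSpace n lam) :=
      isOpen_lt (EuclideanSpace.proj (𝕜 := ℝ) (0 : Fin n)).continuous continuous_const
    exact hHSo.inter (isOpen_Ioi.preimage hWc)
  have hz₀U : z₀ ∈ halfSpace n lam ∩ W ⁻¹' (Ioi m) := by
    refine ⟨hz0HS, ?_⟩
    simp only [Set.mem_preimage, Set.mem_Ioi, hm_def]
    linarith
  obtain ⟨r', hr', hball⟩ := Metric.isOpen_iff.mp hUopen z₀ hz₀U
  set r : ℝ := r' / 2 with hr_def
  have hr : 0 < r := by positivity
  have hcB : closedBall z₀ r ⊆ halfSpace n lam ∩ W ⁻¹' (Ioi m) := by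
    refine subset_trans ?_ hball
    intro z hz
    rw [mem_closedBall] at hz
    rw [mem_ball]
    simp only [hr_def] at hz
    linarith
  have hx₀cB : x₀ ∉ closedBall z₀ r := by
    intro hmem
    have := (hcB hmem).2
    simp only [Set.mem_preimage, Set.mem_Ioi, hzero] at this
    linarith
  have hdz : r < dist x₀ z₀ := by
    by_contra h
    push_neg at h
    exact hx₀cB (by rwa [mem_closedBall])
  -- the positive gap on the closed ball
  set φ : En n → ℝ := fun z => 1 / dist x₀ z ^ p - 1 / dist x₀ (reflPt n lam z) ^ p with hφ_def
  have hKrpos : ∀ z : En n, z 0 ≤ lam → 0 < dist x₀ (reflPt n lam z) ^ p := by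
    intro z hz
    exact Real.rpow_pos_of_pos (lt_of_lt_of_le hd₀ (dist_refl_ge x₀ z hz)) p
  have hφcont : ContinuousOn φ (closedBall z₀ r) := by
    have hd1 : ContinuousOn (fun z : En n => dist x₀ z ^ p) (closedBall z₀ r) :=
      ((continuous_const.dist continuous_id).rpow_const (fun y => Or.inr hp.le)).continuousOn
    have hd2 : Continuous (fun z : En n => dist x₀ (reflPt n lam z) ^ p) :=
      ((continuous_const.dist refl_continuous).rpow_const (fun y => Or.inr hp.le))
    apply ContinuousOn.sub
    · apply continuousOn_const.div hd1
      intro z hz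
      have h1 : dist x₀ z₀ ≤ dist x₀ z + dist z z₀ := dist_triangle _ _ _
      have h2 : dist z z₀ ≤ r := by rwa [← mem_closedBall]
      have : 0 < dist x₀ z := by linarith
      exact ne_of_gt (Real.rpow_pos_of_pos this p)
    · apply continuousOn_const.div hd2.continuousOn
      intro z hz
      have hzHS : z 0 < lam := (hcB hz).1
      exact ne_of_gt (hKrpos z hzHS.le)
  have hφpos : ∀ z ∈ closedBall z₀ r, 0 < φ z := by
    intro z hz
    have hzHS : z 0 < lam := (hcB hz).1
    have h1 : dist x₀ z < dist x₀ (reflPt n lam z) := dist_lt_refl x₀ z hx₀lam hzHS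
    have h2 : 0 < dist x₀ z := by
      have ht : dist x₀ z₀ ≤ dist x₀ z + dist z z₀ := dist_triangle _ _ _
      have : dist z z₀ ≤ r := by rwa [← mem_closedBall]
      linarith
    have h3 : dist x₀ z ^ p < dist x₀ (reflPt n lam z) ^ p :=
      Real.rpow_lt_rpow h2.le h1 hp
    have h4 : 0 < dist x₀ z ^ p := Real.rpow_pos_of_pos h2 p
    simp only [hφ_def]
    have := one_div_lt_one_div_of_lt h4 h3
    linarith
  obtain ⟨zc, hzc, hzcmin⟩ := (isCompact_closedBall z₀ r).exists_isMinOn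
    (nonempty_closedBall.mpr hr.le) hφcont
  set c₀ : ℝ := φ zc with hc₀_def
  have hc₀ : 0 < c₀ := hφpos zc hzc
  have hφge : ∀ z ∈ closedBall z₀ r, c₀ ≤ φ z := fun z hz => hzcmin hz
  -- δ
  set Vb : ℝ := (volume (closedBall z₀ r)).toReal with hVb_def
  have hVb : 0 < Vb := by
    simp only [hVb_def]
    apply ENNReal.toReal_pos
    · exact (measure_closedBall_pos volume z₀ hr).ne'
    · exact (measure_closedBall_lt_top).ne
  set δ : ℝ := m * c₀ * Vb with hδ_def
  have hδ : 0 < δ := by positivity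
  -- η and ε_W from continuity of W at x₀
  set V1 : ℝ := (volume (ball x₀ 1)).toReal with hV1_def
  have hV1 : 0 ≤ V1 := ENNReal.toReal_nonneg
  have hd₀p : 0 < d₀ ^ p := Real.rpow_pos_of_pos hd₀ p
  set η : ℝ := δ * d₀ ^ p / (2 * (V1 + 1)) with hη_def
  have hη : 0 < η := by positivity
  obtain ⟨εW, hεW, hWsmall⟩ : ∃ εW > 0, ∀ y ∈ ball x₀ εW, |W y| < η := by
    have hca : ContinuousAt W x₀ := hWc.continuousAt
    obtain ⟨d, hd, hdd⟩ := Metric.continuousAt_iff.mp hca η hη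
    refine ⟨d, hd, fun y hy => ?_⟩
    have := hdd (mem_ball.mp hy)
    rwa [Real.dist_eq, hzero, sub_zero] at this
  -- the main estimate for small ε
  set ε₀ : ℝ := min (min d₀ (dist x₀ z₀ - r)) (min 1 εW) with hε₀_def
  have hε₀ : 0 < ε₀ := by
    simp only [hε₀_def, lt_min_iff]
    exact ⟨⟨hd₀, by linarith⟩, by norm_num, hεW⟩
  have main : ∀ ε : ℝ, 0 < ε → ε ≤ ε₀ →
      (∫ y in {y : En n | ε ≤ dist x₀ y}, (W x₀ - W y) / dist x₀ y ^ p) ≤ -δ / 2 := by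
    intro ε hε hεle
    have hεd₀ : ε ≤ d₀ := le_trans hεle (le_trans (min_le_left _ _) (min_le_left _ _))
    have hεz : ε ≤ dist x₀ z₀ - r := le_trans hεle (le_trans (min_le_left _ _) (min_le_right _ _))
    have hε1 : ε ≤ 1 := le_trans hεle (le_trans (min_le_right _ _) (min_le_left _ _))
    have hεW' : ε ≤ εW := le_trans hεle (le_trans (min_le_right _ _) (min_le_right _ _))
    set S : Set (En n) := {y | ε ≤ dist x₀ y} with hS_def
    have hSm : MeasurableSet S :=
      (isClosed_le continuous_const (continuous_const.dist continuous_id)).measurableSet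
    have hintS : IntegrableOn f S volume := hint hε
    -- rewrite integrand
    have hre : (∫ y in S, (W x₀ - W y) / dist x₀ y ^ p) = ∫ y in S, -f y := by
      apply integral_congr_ae
      apply Eventually.of_forall
      intro y
      simp only [hzero, zero_sub, hf_def, neg_div]
    rw [hre]
    -- split S into S ∩ Σ and S \ Σ
    have hsplit : (∫ y in S, -f y) =
        (∫ y in S ∩ halfSpace n lam, -f y) + ∫ y in S \ halfSpace n lam, -f y := by
      rw [← setIntegral_union (Disjoint.symm Set.disjoint_sdiff_inter)]
      · rw [Set.inter_union_diff]
      · exact hSm.diff hHSm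
      · exact (hintS.mono_set Set.inter_subset_left).neg
      · exact (hintS.mono_set Set.diff_subset).neg
    rw [hsplit]
    -- change of variables on S \ Σ
    have hpreS : (reflPt n lam : En n → En n) ⁻¹' (S \ halfSpace n lam) = {z : En n | z 0 ≤ lam} := by
      ext z
      simp only [Set.mem_preimage, Set.mem_diff, hS_def, Set.mem_setOf_eq, halfSpace,
        refl_apply_zero, not_lt]
      constructor
      · intro h; linarith [h.2]
      · intro h
        refine ⟨le_trans hεd₀ (dist_refl_ge x₀ z h), by linarith⟩
    have hchg : (∫ y in S \ halfSpace n lam, -f y) = ∫ z in {z : En n | z 0 ≤ lam}, g z := by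
      rw [← mp_refl.setIntegral_preimage_emb hembed (fun y => -f y) (S \ halfSpace n lam), hpreS]
      apply integral_congr_ae
      apply Eventually.of_forall
      intro z
      rw [hgf z]
    rw [hchg]
    -- replace closed half space by open half space (a.e. equal)
    have haeeq : ({z : En n | z 0 ≤ lam} : Set (En n)) =ᵐ[volume] halfSpace n lam := by
      apply MeasureTheory.ae_eq_set.mpr
      constructor
      · apply measure_mono_null ?_ (null_hyperplane (lam := lam))
        intro z hz
        have h1 : z 0 ≤ lam := hz.1
        have h2 : ¬ z 0 < lam := hz.2
        show z 0 = lam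
        cases lt_or_eq_of_le h1 with
        | inl h => exact absurd h h2
        | inr h => exact h
      · have hemp : halfSpace n lam \ {z : En n | z 0 ≤ lam} = ∅ := by
          ext z
          simp only [Set.mem_diff, halfSpace, Set.mem_setOf_eq, not_le,
            Set.mem_empty_iff_false, iff_false, not_and, not_lt]
          intro h1
          linarith
        rw [hemp]
        simp
    rw [setIntegral_congr_set haeeq]
    have hH2 : IntegrableOn g (halfSpace n lam) volume :=
      hgInt.mono_set (fun z hz => show z 0 ≤ lam from le_of_lt hz)
    have hsplit2 : (∫ z in halfSpace n lam, g z) =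
        (∫ z in S ∩ halfSpace n lam, g z) + ∫ z in halfSpace n lam \ S, g z := by
      rw [← setIntegral_union]
      · rw [Set.inter_comm S (halfSpace n lam), Set.inter_union_diff]
      · exact Set.disjoint_sdiff_right.mono_left Set.inter_subset_left
      · exact hHSm.diff hSm
      · exact hH2.mono_set Set.inter_subset_right
      · exact hH2.mono_set Set.diff_subset
    rw [hsplit2, ← add_assoc]
    have hfi : IntegrableOn (fun y => -f y) (S ∩ halfSpace n lam) volume :=
      (hintS.mono_set Set.inter_subset_left).neg
    have hgi : IntegrableOn g (S ∩ halfSpace n lam) volume :=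
      hH2.mono_set Set.inter_subset_right
    have hcomb : (∫ y in S ∩ halfSpace n lam, -f y) + (∫ z in S ∩ halfSpace n lam, g z)
        = ∫ y in S ∩ halfSpace n lam, (g y - f y) := by
      rw [← integral_add hfi hgi]
      apply integral_congr_ae
      apply Eventually.of_forall
      intro y
      ring
    rw [hcomb]
    -- pointwise facts on S ∩ Σ
    have hdistpos : ∀ z ∈ S ∩ halfSpace n lam, 0 < dist x₀ z := by
      intro z hz
      exact lt_of_lt_of_le hε hz.1
    have hnonpos : ∀ z ∈ S ∩ halfSpace n lam, g z - f z ≤ 0 := by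
      intro z hz
      have hWz : 0 ≤ W z := hW_nonneg z hz.2
      have hd1 : 0 < dist x₀ z := hdistpos z hz
      have hd2 : dist x₀ z < dist x₀ (reflPt n lam z) := dist_lt_refl x₀ z hx₀lam hz.2
      have hK : 0 < dist x₀ z ^ p := Real.rpow_pos_of_pos hd1 p
      have hKr : dist x₀ z ^ p ≤ dist x₀ (reflPt n lam z) ^ p :=
        Real.rpow_le_rpow hd1.le hd2.le hp.le
      have hKrpos' : 0 < dist x₀ (reflPt n lam z) ^ p := lt_of_lt_of_le hK hKr
      have : W z / dist x₀ (reflPt n lam z) ^ p ≤ W z / dist x₀ z ^ p :=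
        div_le_div_of_nonneg_left hWz hK hKr
      simp only [hg_def, hf_def]
      linarith
    have hcBsub : closedBall z₀ r ⊆ S ∩ halfSpace n lam := by
      intro z hz
      constructor
      · show ε ≤ dist x₀ z
        have h1 : dist x₀ z₀ ≤ dist x₀ z + dist z z₀ := dist_triangle _ _ _
        have h2 : dist z z₀ ≤ r := mem_closedBall.mp hz
        linarith
      · exact (hcB hz).1
    have hsm' : MeasurableSet (S ∩ halfSpace n lam) := hSm.inter hHSm
    have hintfg : IntegrableOn (fun y => f y - g y) (S ∩ halfSpace n lam) volume := by
      have := ((hintS.mono_set Set.inter_subset_left).sub hgi)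
      exact this
    -- monotonicity: shrink to the closed ball
    have hmono : (∫ y in S ∩ halfSpace n lam, (g y - f y))
        ≤ ∫ y in closedBall z₀ r, (g y - f y) := by
      have h1 : (∫ y in closedBall z₀ r, (f y - g y))
          ≤ ∫ y in S ∩ halfSpace n lam, (f y - g y) := by
        apply setIntegral_mono_set hintfg
        · filter_upwards [ae_restrict_mem hsm'] with z hz
          have := hnonpos z hz
          simp only [Pi.zero_apply]
          linarith
        · exact HasSubset.Subset.eventuallyLE hcBsub
      have e1 : (∫ y in S ∩ halfSpace n lam, (g y - f y))
          = -∫ y in S ∩ halfSpace n lam, (f y - g y) := by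
        rw [← integral_neg]
        apply integral_congr_ae
        apply Eventually.of_forall
        intro y
        ring
      have e2 : (∫ y in closedBall z₀ r, (g y - f y))
          = -∫ y in closedBall z₀ r, (f y - g y) := by
        rw [← integral_neg]
        apply integral_congr_ae
        apply Eventually.of_forall
        intro y
        ring
      rw [e1, e2]
      linarith
    -- bound on the closed ball
    have hball_bound : (∫ y in closedBall z₀ r, (g y - f y)) ≤ -δ := by
      have hptwise : ∀ z ∈ closedBall z₀ r, g z - f z ≤ -(m * c₀) := by
        intro z hz
        have hWz : m < W z := by
          have := (hcB hz).2
          simpa using this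
        have hφz : c₀ ≤ φ z := hφge z hz
        have hφz0 : 0 < φ z := hφpos z hz
        have hrel : g z - f z = -(W z * φ z) := by
          simp only [hg_def, hf_def, hφ_def]
          ring
        rw [hrel]
        nlinarith
      have hc : (∫ y in closedBall z₀ r, (g y - f y))
          ≤ ∫ _y in closedBall z₀ r, (-(m * c₀)) := by
        have hint1 : IntegrableOn (fun y => g y - f y) (closedBall z₀ r) volume := by
          have h : IntegrableOn (fun y => -(f y - g y)) (closedBall z₀ r) volume :=
            (hintfg.mono_set hcBsub).neg
          simpa [neg_sub] using h
        apply setIntegral_mono_on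
        · exact hint1
        · exact integrableOn_const measure_closedBall_lt_top.ne
        · exact measurableSet_closedBall
        · exact hptwise
      have hconst : (∫ _y in closedBall z₀ r, (-(m * c₀))) = -δ := by
        rw [setIntegral_const]
        simp only [smul_eq_mul, hδ_def, hVb_def, measureReal_def]
        ring
      linarith
    -- bound on the small leftover piece
    have hsmallpiece : (∫ z in halfSpace n lam \ S, g z) ≤ δ / 2 := by
      have hsub1 : halfSpace n lam \ S ⊆ ball x₀ ε := by
        intro z hz
        have h2 : ¬ ε ≤ dist x₀ z := hz.2
        rw [mem_ball, dist_comm]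
        linarith [not_le.mp h2]
      have hfin : volume (halfSpace n lam \ S) < ⊤ :=
        lt_of_le_of_lt (measure_mono hsub1) measure_ball_lt_top
      have hbd : ∀ z ∈ halfSpace n lam \ S, ‖g z‖ ≤ η / d₀ ^ p := by
        intro z hz
        have hzball : z ∈ ball x₀ ε := hsub1 hz
        have hzW : |W z| < η := by
          apply hWsmall
          rw [mem_ball] at hzball ⊢
          exact lt_of_lt_of_le hzball hεW'
        have hKr : d₀ ^ p ≤ dist x₀ (reflPt n lam z) ^ p := by
          apply Real.rpow_le_rpow hd₀.le _ hp.le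
          exact dist_refl_ge x₀ z (le_of_lt hz.1)
        have hKrpos' : 0 < dist x₀ (reflPt n lam z) ^ p := lt_of_lt_of_le hd₀p hKr
        simp only [hg_def, Real.norm_eq_abs, abs_div, abs_of_nonneg hKrpos'.le]
        exact div_le_div₀ hη.le hzW.le hd₀p hKr
      have hnorm : ‖∫ z in halfSpace n lam \ S, g z‖
          ≤ (η / d₀ ^ p) * (volume (halfSpace n lam \ S)).toReal := by
        apply norm_setIntegral_le_of_norm_le_const hfin hbd
      have hvol : (volume (halfSpace n lam \ S)).toReal ≤ V1 := by
        apply ENNReal.toReal_mono measure_ball_lt_top.ne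
        apply measure_mono
        refine subset_trans hsub1 ?_
        exact ball_subset_ball hε1
      have hVd : (0:ℝ) ≤ η / d₀ ^ p := by positivity
      have h1 : ‖∫ z in halfSpace n lam \ S, g z‖ ≤ (η / d₀ ^ p) * V1 :=
        le_trans hnorm (mul_le_mul_of_nonneg_left hvol hVd)
      have h2 : (η / d₀ ^ p) * V1 ≤ δ / 2 := by
        have he : η / d₀ ^ p = δ / (2 * (V1 + 1)) := by
          rw [hη_def]
          field_simp
        rw [he, div_mul_eq_mul_div, div_le_div_iff₀ (by positivity) (by norm_num)]
        nlinarith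
      calc (∫ z in halfSpace n lam \ S, g z) ≤ ‖∫ z in halfSpace n lam \ S, g z‖ :=
            le_abs_self _
        _ ≤ δ / 2 := le_trans h1 h2
    linarith [le_trans hmono hball_bound, hsmallpiece]
  -- conclude from the limit
  have hev : ∀ᶠ ε in nhdsWithin (0:ℝ) (Ioi 0),
      cns * (∫ y in {y : En n | ε ≤ dist x₀ y}, (W x₀ - W y) / dist x₀ y ^ p)
        ≤ cns * (-δ / 2) := by
    filter_upwards [Ioc_mem_nhdsGT_of_mem (Set.left_mem_Ico.mpr hε₀)] with ε hε
    exact mul_le_mul_of_nonneg_left (main ε hε.1 hε.2) hcns.le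
  have hL' : Tendsto
      (fun ε : ℝ => cns * ∫ y in {y : En n | ε ≤ dist x₀ y},
        (W x₀ - W y) / dist x₀ y ^ p)
      (nhdsWithin 0 (Ioi 0)) (nhds L) := hL
  have hle : L ≤ cns * (-δ / 2) := le_of_tendsto hL' hev
  nlinarith
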